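/- If u : [0,∞) → ℝ is C¹ and (1+x)^n u^{(i)}(x) ∈ L¹([0,∞)) for i = 0,1 and some integer n ≥ 1, then |u(x)| ≤ C/(1+x)^n for all x ≥ 0, for some constant C. -/

import Mathlib

open MeasureTheory Set

theorem stmt0 (u u' : ℝ → ℝ) (n : ℕ) (hn : 1 ≤ n)
    (hderiv : ∀ x ∈ Ici (0:ℝ), HasDerivWithinAt u (u' x) (Ici 0) x)
    (hcont : ContinuousOn u' (Ici 0))
    (h0 : IntegrableOn (fun x => (1 + x) ^ n * |u x|) (Ici 0))
    (h1 : IntegrableOn (fun x => (1 + x) ^ n * |u' x|) (Ici 0)) :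
    ∃ C : ℝ, ∀ x : ℝ, 0 ≤ x → |u x| ≤ C / (1 + x) ^ n := by
  set v : ℝ → ℝ := fun x => (1 + x) ^ n * u x with hv
  set g : ℝ → ℝ := fun x => (n : ℝ) * (1 + x) ^ (n - 1) * u x + (1 + x) ^ n * u' x with hgdef
  have hu_cont : ContinuousOn u (Ici 0) := fun x hx => (hderiv x hx).continuousWithinAt
  have hgderiv : ∀ x ∈ Ici (0:ℝ), HasDerivWithinAt v (g x) (Ici 0) x := by
    intro x hx
    have h1' : HasDerivAt (fun t : ℝ => (1 + t) ^ n)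
        ((n : ℝ) * (1 + x) ^ (n - 1)) x := by
      have := ((hasDerivAt_id x).const_add 1).pow n
      simpa [mul_comm, mul_assoc, Pi.pow_def] using this
    exact h1'.hasDerivWithinAt.mul (hderiv x hx)
  have hpcont : ContinuousOn (fun x : ℝ => (1 + x) ^ n) (Ici 0) :=
    (continuousOn_const.add continuousOn_id).pow n
  have hv_cont : ContinuousOn v (Ici 0) := hpcont.mul hu_cont
  have hg_cont : ContinuousOn g (Ici 0) := by
    apply ContinuousOn.add
    · exact (continuousOn_const.mul ((continuousOn_const.add continuousOn_id).pow _)).mul hu_cont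
    · exact hpcont.mul hcont
  have hg_int : IntegrableOn g (Ici 0) := by
    have hmeas : AEStronglyMeasurable g (volume.restrict (Ici 0)) :=
      hg_cont.aestronglyMeasurable measurableSet_Ici
    apply Integrable.mono' ((h0.const_mul (n : ℝ)).add h1) hmeas
    refine (ae_restrict_iff' measurableSet_Ici).2 (ae_of_all _ fun x hx => ?_)
    have hx0 : (0:ℝ) ≤ x := hx
    have h1x : (1:ℝ) ≤ 1 + x := by linarith
    have hple : (1 + x) ^ (n - 1) ≤ (1 + x) ^ n :=
      pow_le_pow_right₀ h1x (Nat.sub_le n 1)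
    have hpnn : (0:ℝ) ≤ (1 + x) ^ (n - 1) := by positivity
    have hpnn2 : (0:ℝ) ≤ (1 + x) ^ n := by positivity
    have e1 : |(n : ℝ) * (1 + x) ^ (n - 1) * u x| = (n : ℝ) * (1 + x) ^ (n - 1) * |u x| := by
      rw [abs_mul, abs_mul, Nat.abs_cast, abs_of_nonneg hpnn]
    have e2 : |(1 + x) ^ n * u' x| = (1 + x) ^ n * |u' x| := by
      rw [abs_mul, abs_of_nonneg hpnn2]
    calc ‖g x‖ ≤ (n : ℝ) * (1 + x) ^ (n - 1) * |u x| + (1 + x) ^ n * |u' x| := by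
          rw [Real.norm_eq_abs]
          exact (abs_add_le _ _).trans (by rw [e1, e2])
      _ ≤ (n : ℝ) * ((1 + x) ^ n * |u x|) + (1 + x) ^ n * |u' x| := by
          have := mul_le_mul_of_nonneg_right hple (abs_nonneg (u x))
          nlinarith [Nat.cast_nonneg (α := ℝ) n]
  have habs_int : IntegrableOn (fun x => |g x|) (Ici 0) := hg_int.abs
  refine ⟨|u 0| + ∫ t in Ici (0:ℝ), |g t|, fun x hx => ?_⟩
  have hx0 : (0:ℝ) ≤ x := hx
  have hftc : ∫ t in (0:ℝ)..x, g t = v x - v 0 := by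
    apply intervalIntegral.integral_eq_sub_of_hasDeriv_right_of_le hx0
    · exact hv_cont.mono (Icc_subset_Ici_self)
    · intro t ht
      have := (hgderiv t (le_of_lt ht.1)).hasDerivAt (Ici_mem_nhds ht.1)
      exact this.hasDerivWithinAt
    · exact (hg_cont.mono Icc_subset_Ici_self).intervalIntegrable_of_Icc hx0
  have hbound1 : |∫ t in (0:ℝ)..x, g t| ≤ ∫ t in Ici (0:ℝ), |g t| := by
    calc |∫ t in (0:ℝ)..x, g t| ≤ ∫ t in (0:ℝ)..x, |g t| := by
          apply intervalIntegral.abs_integral_le_integral_abs hx0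
      _ = ∫ t in Ioc (0:ℝ) x, |g t| := intervalIntegral.integral_of_le hx0
      _ ≤ ∫ t in Ici (0:ℝ), |g t| := by
          apply setIntegral_mono_set habs_int
          · exact (ae_restrict_iff' measurableSet_Ici).2 (ae_of_all _ fun t _ => abs_nonneg _)
          · exact HasSubset.Subset.eventuallyLE (fun t ht => le_of_lt ht.1)
  have hvx : |v x| ≤ |u 0| + ∫ t in Ici (0:ℝ), |g t| := by
    have : v x = v 0 + ∫ t in (0:ℝ)..x, g t := by rw [hftc]; ring
    rw [this]
    have hv0 : v 0 = u 0 := by simp [hv]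
    calc |v 0 + ∫ t in (0:ℝ)..x, g t| ≤ |v 0| + |∫ t in (0:ℝ)..x, g t| := abs_add_le _ _
      _ ≤ |u 0| + ∫ t in Ici (0:ℝ), |g t| := by rw [hv0]; exact add_le_add_right hbound1 _
  have hpos : (0:ℝ) < (1 + x) ^ n := by positivity
  rw [le_div_iff₀ hpos]
  calc |u x| * (1 + x) ^ n = |v x| := by
        rw [hv]; rw [abs_mul, abs_of_pos hpos]; ring
    _ ≤ _ := hvx
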